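/- Let I be an interval with inf I = 0 and f : I → ℝ continuous and strictly monotone. If there exists ε ∈ I such that the quasi-arithmetic mean A_f restricted to (0,ε) is a weak-Hardy mean, then A_f is a weak-Hardy mean on I. -/

import Mathlib

/-- The quasi-arithmetic mean generated by `f`, the inverse being taken on `I`. -/
noncomputable def qam (f : ℝ → ℝ) (I : Set ℝ) (n : ℕ) (a : Fin n → ℝ) : ℝ :=
  Function.invFunOn f I ((∑ i, f (a i)) / n)

lemma avg_mem {S : Set ℝ} (hS : S.OrdConnected) {n : ℕ} (hn : 0 < n)
    (y : Fin n → ℝ) (hy : ∀ i, y i ∈ S) : (∑ i, y i) / n ∈ S := by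
  have hne : Nonempty (Fin n) := ⟨⟨0, hn⟩⟩
  obtain ⟨i₀, -, h₀⟩ := Finset.exists_min_image Finset.univ y
    ⟨Classical.arbitrary _, Finset.mem_univ _⟩
  obtain ⟨i₁, -, h₁⟩ := Finset.exists_max_image Finset.univ y
    ⟨Classical.arbitrary _, Finset.mem_univ _⟩
  have hnpos : (0:ℝ) < n := by exact_mod_cast hn
  have hlow : (n:ℝ) * y i₀ ≤ ∑ i, y i := by
    calc (n:ℝ) * y i₀ = ∑ _i : Fin n, y i₀ := by
          simp [Finset.sum_const, mul_comm]
      _ ≤ ∑ i, y i := Finset.sum_le_sum fun i _ => h₀ i (Finset.mem_univ i)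
  have hhigh : (∑ i, y i) ≤ (n:ℝ) * y i₁ := by
    calc (∑ i, y i) ≤ ∑ _i : Fin n, y i₁ :=
          Finset.sum_le_sum fun i _ => h₁ i (Finset.mem_univ i)
      _ = (n:ℝ) * y i₁ := by simp [Finset.sum_const, mul_comm]
  exact hS.out (hy i₀) (hy i₁)
    ⟨(le_div_iff₀ hnpos).mpr (by linarith), (div_le_iff₀ hnpos).mpr (by linarith)⟩

lemma qam_spec {I : Set ℝ} (hconn : I.OrdConnected) {f : ℝ → ℝ}
    (hf : ContinuousOn f I) {n : ℕ} (hn : 0 < n)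
    {a : Fin n → ℝ} (ha : ∀ i, a i ∈ I) :
    qam f I n a ∈ I ∧ f (qam f I n a) = (∑ i, f (a i)) / n := by
  have himg : (f '' I).OrdConnected := (hconn.isPreconnected.image f hf).ordConnected
  have havg : (∑ i, f (a i)) / n ∈ f '' I :=
    avg_mem himg hn _ (fun i => ⟨a i, ha i, rfl⟩)
  obtain ⟨x, hx, hfx⟩ := havg
  exact ⟨Function.invFunOn_mem ⟨x, hx, hfx⟩, Function.invFunOn_eq ⟨x, hx, hfx⟩⟩

lemma qam_neg {I : Set ℝ} (hconn : I.OrdConnected) {f : ℝ → ℝ}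
    (hf : ContinuousOn f I) (hanti : StrictAntiOn f I) {n : ℕ} (hn : 0 < n)
    {a : Fin n → ℝ} (ha : ∀ i, a i ∈ I) :
    qam f I n a = qam (fun x => -f x) I n a := by
  obtain ⟨h1, h2⟩ := qam_spec hconn hf hn ha
  obtain ⟨h1', h2'⟩ := qam_spec hconn (f := fun x => -f x) hf.neg hn ha
  apply hanti.injOn h1 h1'
  rw [h2]
  have : f (qam (fun x => -f x) I n a) =
      -((∑ i, (fun x => -f x) (a i)) / (n:ℝ)) := by
    rw [← h2']; ring
  rw [this]
  simp [neg_div]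

lemma main_mono (I : Set ℝ) (hne : I.Nonempty) (hconn : I.OrdConnected)
    (hIpos : I ⊆ Set.Ioi 0) (hInf : sInf I = 0)
    (f : ℝ → ℝ) (hf : ContinuousOn f I) (hm : StrictMonoOn f I)
    (ε : ℝ) (hε : ε ∈ I)
    (hwh : ∀ a : ℕ → ℝ, (∀ n, a n ∈ Set.Ioo (0:ℝ) ε) → Summable a →
      Summable (fun n => qam f I (n + 1) (fun k : Fin (n + 1) => a (k : ℕ)))) :
    ∀ a : ℕ → ℝ, (∀ n, a n ∈ I) → Summable a →
      Summable (fun n => qam f I (n + 1) (fun k : Fin (n + 1) => a (k : ℕ))) := by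
  intro a ha hsum
  have hbdd : BddBelow I := ⟨0, fun y hy => le_of_lt (hIpos hy)⟩
  have hεpos : (0:ℝ) < ε := hIpos hε
  -- pick w ∈ I with 0 < w < ε
  obtain ⟨w, hwI, hwε⟩ : ∃ w ∈ I, w < ε := by
    have : sInf I < ε := by rw [hInf]; exact hεpos
    exact (csInf_lt_iff hbdd hne).mp this
  have hw0 : 0 < w := hIpos hwI
  -- u between w and ε
  set u : ℝ := (w + ε) / 2 with hu
  have hwu : w < u := by rw [hu]; linarith
  have huε : u < ε := by rw [hu]; linarith
  have huI : u ∈ I := hconn.out hwI hε ⟨le_of_lt hwu, le_of_lt huε⟩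
  have hu0 : 0 < u := lt_trans hw0 hwu
  have hfwu : f w < f u := hm hwI huI hwu
  -- tail below w
  obtain ⟨N, hN⟩ : ∃ N, ∀ n ≥ N, a n < w :=
    Filter.eventually_atTop.mp (hsum.tendsto_atTop_zero.eventually (gt_mem_nhds hw0))
  set T : ℝ := ∑ i ∈ Finset.range N, f (a i) with hT
  -- choose m
  obtain ⟨m₁, hm₁⟩ := exists_nat_ge ((T - N * f w + 1) / (f u - f w))
  set m : ℕ := max N m₁ with hmdef
  have hmN : N ≤ m := le_max_left _ _
  have hm2 : T - (N:ℝ) * f w + 1 ≤ (m:ℝ) * (f u - f w) := by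
    have h1 : (T - N * f w + 1) / (f u - f w) ≤ (m:ℝ) :=
      le_trans hm₁ (by exact_mod_cast le_max_right N m₁)
    exact (div_le_iff₀ (by linarith)).mp h1
  -- choose J₀
  obtain ⟨J₀, hJ₀⟩ := exists_nat_ge (((m:ℝ) - N) * (T - N * f w))
  -- the comparison sequence
  set b : ℕ → ℝ := fun k => if k < m then u else a (N + (k - m)) with hb
  have hbmem : ∀ k, b k ∈ Set.Ioo (0:ℝ) ε := by
    intro k
    by_cases h : k < m
    · simp only [hb, if_pos h]; exact ⟨hu0, huε⟩
    · simp only [hb, if_neg h]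
      exact ⟨hIpos (ha _), lt_trans (hN _ (Nat.le_add_right _ _)) hwε⟩
  have hbI : ∀ k, b k ∈ I := by
    intro k
    by_cases h : k < m
    · simp only [hb, if_pos h]; exact huI
    · simp only [hb, if_neg h]; exact ha _
  have hbsum : Summable b := by
    rw [← summable_nat_add_iff m]
    have : (fun k => b (k + m)) = fun k => a (N + k) := by
      funext k
      simp only [hb, if_neg (by omega : ¬ k + m < m)]
      congr 1
      omega
    rw [this]
    have := (summable_nat_add_iff (f := a) N).mpr hsum
    simpa [Nat.add_comm] using this
  set d : ℕ → ℝ := fun n => qam f I (n + 1) (fun k : Fin (n + 1) => b (k : ℕ)) with hd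
  have hdsum : Summable d := hwh b hbmem hbsum
  set c : ℕ → ℝ := fun n => qam f I (n + 1) (fun k : Fin (n + 1) => a (k : ℕ)) with hc
  have hcspec : ∀ n, c n ∈ I ∧ f (c n) = (∑ i ∈ Finset.range (n+1), f (a i)) / (n+1) := by
    intro n
    have := qam_spec hconn hf (Nat.succ_pos n) (a := fun k : Fin (n+1) => a (k : ℕ))
      (fun i => ha _)
    rw [Fin.sum_univ_eq_sum_range (fun k => f (a k)) (n+1)] at this
    refine ⟨this.1, ?_⟩
    rw [this.2]
    norm_cast
  have hdspec : ∀ n, d n ∈ I ∧ f (d n) = (∑ i ∈ Finset.range (n+1), f (b i)) / (n+1) := by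
    intro n
    have := qam_spec hconn hf (Nat.succ_pos n) (a := fun k : Fin (n+1) => b (k : ℕ))
      (fun i => hbI _)
    rw [Fin.sum_univ_eq_sum_range (fun k => f (b k)) (n+1)] at this
    refine ⟨this.1, ?_⟩
    rw [this.2]
    norm_cast
  -- key inequality
  have key : ∀ j, J₀ ≤ j → c (N + j) ≤ d (m + j) := by
    intro j hj
    obtain ⟨hcI, hcf⟩ := hcspec (N + j)
    obtain ⟨hdI, hdf⟩ := hdspec (m + j)
    set R : ℝ := ∑ i ∈ Finset.range (j+1), f (a (N + i)) with hR
    have hsa : ∑ i ∈ Finset.range (N + j + 1), f (a i) = T + R := by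
      have : N + j + 1 = N + (j + 1) := by omega
      rw [this, Finset.sum_range_add]
    have hsb : ∑ i ∈ Finset.range (m + j + 1), f (b i) = (m:ℝ) * f u + R := by
      have h1 : m + j + 1 = m + (j + 1) := by omega
      rw [h1, Finset.sum_range_add]
      congr 1
      · rw [Finset.sum_congr rfl (fun i hi => by
          rw [show b i = u from by
            simp only [hb, if_pos (Finset.mem_range.mp hi)]])]
        simp [mul_comm]
      · apply Finset.sum_congr rfl
        intro i _
        congr 1
        simp only [hb, if_neg (by omega : ¬ m + i < m)]
        congr 1
        omega
    have hRle : R ≤ ((j:ℝ)+1) * f w := by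
      have : R ≤ ∑ _i ∈ Finset.range (j+1), f w := by
        apply Finset.sum_le_sum
        intro i _
        exact le_of_lt (hm (ha _) hwI (hN _ (Nat.le_add_right _ _)))
      simpa [mul_comm] using this
    have hjJ : ((m:ℝ) - N) * (T - N * f w) ≤ (j:ℝ) :=
      le_trans hJ₀ (by exact_mod_cast hj)
    have hmNr : (N:ℝ) ≤ (m:ℝ) := by exact_mod_cast hmN
    have hden1 : (0:ℝ) < (N:ℝ) + j + 1 := by positivity
    have hden2 : (0:ℝ) < (m:ℝ) + j + 1 := by positivity
    have hfle : f (c (N + j)) ≤ f (d (m + j)) := by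
      rw [hcf, hdf, hsa, hsb]
      push_cast
      rw [div_le_div_iff₀ (by linarith) (by linarith)]
      have hint1 : R * ((m:ℝ) - N) ≤ ((j:ℝ)+1) * f w * ((m:ℝ) - N) :=
        mul_le_mul_of_nonneg_right hRle (by linarith)
      have hint2 : (((m:ℝ) - N) * f w + T + 1) * ((N:ℝ) + j + 1) ≤
          (m:ℝ) * f u * ((N:ℝ) + j + 1) := by
        apply mul_le_mul_of_nonneg_right _ (by linarith)
        linarith [hm2]
      linarith [hint1, hint2, hjJ]
    exact (hm.le_iff_le hcI hdI).mp hfle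
  -- conclude summability
  show Summable c
  rw [← summable_nat_add_iff (N + J₀)]
  apply Summable.of_nonneg_of_le
    (f := fun n => d (n + (m + J₀)))
  · intro n
    exact le_of_lt (hIpos (hcspec _).1)
  · intro n
    have h1 : n + (N + J₀) = N + (J₀ + n) := by omega
    have h2 : n + (m + J₀) = m + (J₀ + n) := by omega
    rw [h1, h2]
    exact key (J₀ + n) (Nat.le_add_right _ _)
  · exact (summable_nat_add_iff (m + J₀)).mpr hdsum

theorem stmt_12 (I : Set ℝ) (hne : I.Nonempty) (hconn : I.OrdConnected)
    (hIpos : I ⊆ Set.Ioi 0) (hInf : sInf I = 0)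
    (f : ℝ → ℝ) (hf : ContinuousOn f I)
    (hmono : StrictMonoOn f I ∨ StrictAntiOn f I)
    (ε : ℝ) (hε : ε ∈ I)
    (hwh : ∀ a : ℕ → ℝ, (∀ n, a n ∈ Set.Ioo (0:ℝ) ε) → Summable a →
      Summable (fun n => qam f I (n + 1) (fun k : Fin (n + 1) => a (k : ℕ)))) :
    ∀ a : ℕ → ℝ, (∀ n, a n ∈ I) → Summable a →
      Summable (fun n => qam f I (n + 1) (fun k : Fin (n + 1) => a (k : ℕ))) := by
  rcases hmono with hm | hanti
  · exact main_mono I hne hconn hIpos hInf f hf hm ε hε hwh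
  · -- Ioo 0 ε ⊆ I
    have hIoo : Set.Ioo (0:ℝ) ε ⊆ I := by
      intro x hx
      have hbdd : BddBelow I := ⟨0, fun y hy => le_of_lt (hIpos hy)⟩
      obtain ⟨v, hvI, hvx⟩ : ∃ v ∈ I, v < x := by
        have : sInf I < x := by rw [hInf]; exact hx.1
        exact (csInf_lt_iff hbdd hne).mp this
      exact hconn.out hvI hε ⟨le_of_lt hvx, le_of_lt hx.2⟩
    set g : ℝ → ℝ := fun x => -f x with hg
    have hgc : ContinuousOn g I := hf.neg
    have hgm : StrictMonoOn g I := fun x hx y hy hxy => neg_lt_neg (hanti hx hy hxy)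
    have hwh' : ∀ a : ℕ → ℝ, (∀ n, a n ∈ Set.Ioo (0:ℝ) ε) → Summable a →
        Summable (fun n => qam g I (n + 1) (fun k : Fin (n + 1) => a (k : ℕ))) := by
      intro a hma hs
      have := hwh a hma hs
      have heq : (fun n => qam f I (n + 1) (fun k : Fin (n + 1) => a (k : ℕ))) =
          (fun n => qam g I (n + 1) (fun k : Fin (n + 1) => a (k : ℕ))) := by
        funext n
        exact qam_neg hconn hf hanti (Nat.succ_pos n) (fun i => hIoo (hma _))
      rwa [heq] at this
    intro a ha hs
    have := main_mono I hne hconn hIpos hInf g hgc hgm ε hε hwh' a ha hs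
    have heq : (fun n => qam f I (n + 1) (fun k : Fin (n + 1) => a (k : ℕ))) =
        (fun n => qam g I (n + 1) (fun k : Fin (n + 1) => a (k : ℕ))) := by
      funext n
      exact qam_neg hconn hf hanti (Nat.succ_pos n) (fun i => ha _)
    rwa [heq]
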